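/- Let n, d ∈ ℕ with n ≥ 2 and d ≥ 2 satisfy (n+1)/(n−1) > d/2. Then for every γ ∈ (−∞, d/2 + min(d−2, 1) + n(1 − d/2)) one has sup_{k ∈ ℤ^d} Σ_{l₁,…,l_n ∈ ℤ^d with l₁+⋯+l_n = k} (λ_k)^γ / ( (λ_{l₁})^{1 + min(d−2,1)/n} ⋯ (λ_{l_n})^{1 + min(d−2,1)/n} ) < ∞. -/

import Mathlib

open scoped ENNReal

/-- `λ_x = 1 + x₁² + ⋯ + x_d²` for a lattice point `x ∈ ℤ^d`. -/
noncomputable def lam {d : ℕ} (x : Fin d → ℤ) : ℝ := 1 + ∑ i, ((x i : ℝ)) ^ 2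


private lemma one_le_lam {d : ℕ} (x : Fin d → ℤ) : 1 ≤ lam x := by
  have h : (0:ℝ) ≤ ∑ i, ((x i : ℝ))^2 := Finset.sum_nonneg fun i _ => sq_nonneg _
  unfold lam; linarith

private lemma lam_pos {d : ℕ} (x : Fin d → ℤ) : 0 < lam x :=
  lt_of_lt_of_le one_pos (one_le_lam x)

private lemma ofReal_prod' {ι : Type*} (s : Finset ι) (f : ι → ℝ) (hf : ∀ i ∈ s, 0 ≤ f i) :
    ENNReal.ofReal (∏ i ∈ s, f i) = ∏ i ∈ s, ENNReal.ofReal (f i) := by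
  classical
  induction s using Finset.induction with
  | empty => simp
  | @insert a s' ha ih =>
    rw [Finset.prod_insert ha, Finset.prod_insert ha,
      ENNReal.ofReal_mul (hf a (Finset.mem_insert_self a s')),
      ih (fun i hi => hf i (Finset.mem_insert_of_mem hi))]

private lemma tsum_pi_prod {V : Type*} (f : V → ℝ≥0∞) :
    ∀ m : ℕ, ∑' g : Fin m → V, ∏ i, f (g i) = (∑' v, f v) ^ m := by
  intro m
  induction m with
  | zero =>
    rw [pow_zero, tsum_eq_single (fun i => i.elim0)
      (by intro b hb; exact absurd (Subsingleton.elim b _) hb)]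
    simp
  | succ m ih =>
    rw [← (Fin.consEquiv (fun _ : Fin (m+1) => V)).tsum_eq]
    have he : ∀ p : V × (Fin m → V),
        (∏ i, f (((Fin.consEquiv (fun _ : Fin (m+1) => V)) p) i)) = f p.1 * ∏ i, f (p.2 i) := by
      intro p
      rw [Fin.prod_univ_succ]
      simp [Fin.consEquiv]
    rw [tsum_congr he, ENNReal.tsum_prod']
    simp_rw [ENNReal.tsum_mul_left]
    rw [ENNReal.tsum_mul_right, ih, pow_succ]
    ring

private lemma tsum_pi_prod' {ι V : Type*} [Fintype ι] (f : V → ℝ≥0∞) :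
    ∑' g : ι → V, ∏ i, f (g i) = (∑' v, f v) ^ (Fintype.card ι) := by
  classical
  let e := Fintype.equivFin ι
  rw [← tsum_pi_prod f (Fintype.card ι)]
  rw [← (Equiv.arrowCongr e.symm (Equiv.refl V)).tsum_eq (fun g : ι → V => ∏ i, f (g i))]
  apply tsum_congr
  intro h
  have : ∀ i : ι, ((Equiv.arrowCongr e.symm (Equiv.refl V)) h) i = h (e i) := by
    intro i; simp [Equiv.arrowCongr]
  rw [Finset.prod_congr rfl (fun i _ => by rw [this i])]
  exact (Equiv.prod_comp e (fun j => f (h j)))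

private lemma Z1_lt_top {t : ℝ} (ht : 1/2 < t) :
    ∑' m : ℤ, ENNReal.ofReal ((1 + (m:ℝ)^2) ^ (-t)) < ⊤ := by
  have hs : Summable (fun m : ℤ => (1 + (m:ℝ)^2) ^ (-t)) := by
    rw [← Finset.summable_compl_iff ({0} : Finset ℤ)]
    have hsum : Summable (fun m : {x : ℤ // x ∉ ({0}:Finset ℤ)} => |((m:ℤ):ℝ)| ^ (-(2*t))) :=
      (Real.summable_abs_int_rpow (by linarith)).subtype _
    apply Summable.of_nonneg_of_le (fun m => Real.rpow_nonneg (by positivity) _) ?_ hsum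
    rintro ⟨m, hm⟩
    have hm0 : m ≠ 0 := by simpa using hm
    have h1 : (1:ℝ) ≤ |(m:ℝ)| := by
      have : (1:ℤ) ≤ |m| := Int.one_le_abs hm0
      calc (1:ℝ) ≤ ((|m| : ℤ) : ℝ) := by exact_mod_cast this
      _ = |(m:ℝ)| := by push_cast; ring
    have h2 : |(m:ℝ)| ^ (-(2*t)) = ((m:ℝ)^2) ^ (-t) := by
      rw [← sq_abs, ← Real.rpow_natCast |(m:ℝ)| 2, ← Real.rpow_mul (abs_nonneg _)]
      norm_num
    show (1 + (m:ℝ)^2) ^ (-t) ≤ |(m:ℝ)| ^ (-(2*t))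
    rw [h2]
    apply Real.rpow_le_rpow_of_nonpos (by positivity) (by linarith) (by linarith)
  calc ∑' m : ℤ, ENNReal.ofReal ((1 + (m:ℝ)^2) ^ (-t))
      = ENNReal.ofReal (∑' m : ℤ, (1 + (m:ℝ)^2) ^ (-t)) :=
        (ENNReal.ofReal_tsum_of_nonneg (fun m => Real.rpow_nonneg (by positivity) _) hs).symm
  _ < ⊤ := ENNReal.ofReal_lt_top

private lemma Z_lt_top {d : ℕ} (hd : 1 ≤ d) {s : ℝ} (hs : (d:ℝ)/2 < s)
    (Zone : ∀ t : ℝ, 1/2 < t → ∑' m : ℤ, ENNReal.ofReal ((1 + (m:ℝ)^2) ^ (-t)) < ⊤)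
    (tpp : ∀ (f : ℤ → ℝ≥0∞) (m : ℕ), ∑' g : Fin m → ℤ, ∏ i, f (g i) = (∑' v, f v) ^ m)
    (orp : ∀ (s' : Finset (Fin d)) (f : Fin d → ℝ) (_ : ∀ i ∈ s', 0 ≤ f i),
      ENNReal.ofReal (∏ i ∈ s', f i) = ∏ i ∈ s', ENNReal.ofReal (f i)) :
    ∑' x : Fin d → ℤ, ENNReal.ofReal (lam x ^ (-s)) < ⊤ := by
  have hd0 : (0:ℝ) < d := by exact_mod_cast Nat.lt_of_lt_of_le Nat.zero_lt_one hd
  have ht : 1/2 < s / d := by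
    rw [lt_div_iff₀ hd0]; nlinarith
  have key : ∀ x : Fin d → ℤ, lam x ^ (-s) ≤ ∏ i, (1 + ((x i:ℝ))^2) ^ (-(s/(d:ℝ))) := by
    intro x
    have hz : ∀ i ∈ Finset.univ, (0:ℝ) ≤ 1 + ((x i:ℝ))^2 := fun i _ => by positivity
    have hAM : ∏ i, (1 + ((x i:ℝ))^2) ^ ((1:ℝ)/d) ≤ lam x := by
      have h1 := Real.geom_mean_le_arith_mean_weighted Finset.univ
        (fun _ => (1:ℝ)/d) (fun i => 1 + ((x i:ℝ))^2)
        (fun i _ => by positivity)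
        (by rw [Finset.sum_const, Finset.card_univ, Fintype.card_fin, nsmul_eq_mul]
            field_simp)
        hz
      calc ∏ i, (1 + ((x i:ℝ))^2) ^ ((1:ℝ)/d) ≤ ∑ i, (1:ℝ)/d * (1 + ((x i:ℝ))^2) := h1
      _ = 1 + (∑ i, ((x i:ℝ))^2) / d := by
          rw [← Finset.mul_sum, Finset.sum_add_distrib, Finset.sum_const, Finset.card_univ,
            Fintype.card_fin, nsmul_eq_mul]
          field_simp
      _ ≤ 1 + ∑ i, ((x i:ℝ))^2 := by
          have hnn : (0:ℝ) ≤ ∑ i, ((x i:ℝ))^2 := Finset.sum_nonneg fun i _ => sq_nonneg _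
          have : (∑ i, ((x i:ℝ))^2) / d ≤ ∑ i, ((x i:ℝ))^2 := by
            apply div_le_self hnn; exact_mod_cast hd
          linarith
      _ = lam x := rfl
    have hP : 0 < ∏ i, (1 + ((x i:ℝ))^2) ^ ((1:ℝ)/d) :=
      Finset.prod_pos fun i _ => Real.rpow_pos_of_pos (by positivity) _
    calc lam x ^ (-s) ≤ (∏ i, (1 + ((x i:ℝ))^2) ^ ((1:ℝ)/d)) ^ (-s) :=
          Real.rpow_le_rpow_of_nonpos hP hAM (by nlinarith)
    _ = ∏ i, (1 + ((x i:ℝ))^2) ^ (-(s/(d:ℝ))) := by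
        rw [← Real.finset_prod_rpow _ _ (fun i _ => Real.rpow_nonneg (by positivity) _) (-s)]
        apply Finset.prod_congr rfl
        intro i _
        rw [← Real.rpow_mul (by positivity)]
        congr 1
        field_simp
  calc ∑' x : Fin d → ℤ, ENNReal.ofReal (lam x ^ (-s))
      ≤ ∑' x : Fin d → ℤ, ∏ i, ENNReal.ofReal ((1 + ((x i:ℝ))^2) ^ (-(s/(d:ℝ)))) := by
        apply ENNReal.tsum_le_tsum; intro x
        rw [← orp Finset.univ _ (fun i _ => Real.rpow_nonneg (by positivity) _)]
        exact ENNReal.ofReal_le_ofReal (key x)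
  _ = (∑' m : ℤ, ENNReal.ofReal ((1 + (m:ℝ)^2) ^ (-(s/(d:ℝ))))) ^ d := by
        have := tpp (fun m : ℤ => ENNReal.ofReal ((1 + (m:ℝ)^2) ^ (-(s/(d:ℝ))))) d
        exact this
  _ < ⊤ := ENNReal.pow_lt_top (Zone _ ht)

private lemma lam_sum_le {n d : ℕ} (hn : 1 ≤ n) (k : Fin d → ℤ) (l : Fin n → (Fin d → ℤ))
    (hl : ∑ j, l j = k) {j₀ : Fin n} (hj₀ : ∀ j, lam (l j) ≤ lam (l j₀)) :
    lam k ≤ (n:ℝ)^2 * lam (l j₀) := by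
  have hk : ∀ c, ((k c : ℝ)) = ∑ j, ((l j c : ℝ)) := by
    intro c
    have h1 := congrFun hl c
    rw [Finset.sum_apply] at h1
    exact_mod_cast (congrArg (Int.cast : ℤ → ℝ) h1).symm
  have h1 : ∀ c, ((k c:ℝ))^2 ≤ (n:ℝ) * ∑ j, ((l j c:ℝ))^2 := by
    intro c; rw [hk c]
    have h2 := sq_sum_le_card_mul_sum_sq (s := (Finset.univ : Finset (Fin n)))
      (f := fun j => ((l j c : ℝ)))
    simpa using h2
  have h2 : ∑ c, ((k c:ℝ))^2 ≤ (n:ℝ) * ∑ j, (lam (l j) - 1) := by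
    calc ∑ c, ((k c:ℝ))^2 ≤ ∑ c, (n:ℝ) * ∑ j, ((l j c:ℝ))^2 :=
          Finset.sum_le_sum (fun c _ => h1 c)
    _ = (n:ℝ) * ∑ j, ∑ c, ((l j c:ℝ))^2 := by rw [← Finset.mul_sum, Finset.sum_comm]
    _ = (n:ℝ) * ∑ j, (lam (l j) - 1) := by
        congr 1; apply Finset.sum_congr rfl; intro j _; unfold lam; ring
  have h3 : ∑ j, (lam (l j) - 1) ≤ (n:ℝ) * (lam (l j₀) - 1) := by
    calc ∑ j, (lam (l j) - 1) ≤ ∑ _j : Fin n, (lam (l j₀) - 1) :=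
          Finset.sum_le_sum (fun j _ => by linarith [hj₀ j])
    _ = (n:ℝ) * (lam (l j₀) - 1) := by
        rw [Finset.sum_const, Finset.card_univ, Fintype.card_fin, nsmul_eq_mul]
  have h4 : (1:ℝ) ≤ (n:ℝ) := by exact_mod_cast hn
  have h5 : 1 ≤ lam (l j₀) := one_le_lam _
  have h6 : (n:ℝ) * (∑ j, (lam (l j) - 1)) ≤ (n:ℝ) * ((n:ℝ) * (lam (l j₀) - 1)) :=
    mul_le_mul_of_nonneg_left h3 (by positivity)
  have hlamk : lam k = 1 + ∑ c, ((k c:ℝ))^2 := rfl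
  nlinarith [h2, h6, h5, h4]

private lemma key_pointwise {n d : ℕ} (hn : 2 ≤ n) {k : Fin d → ℤ} (l : Fin n → (Fin d → ℤ))
    (hl : ∑ j, l j = k) {γ α β : ℝ} (hγ0 : 0 ≤ γ) (hαβ : α ≤ β)
    (hexp : γ + ((n:ℝ) - 1) * (β - α) ≤ α) :
    lam k ^ γ / ∏ j, lam (l j) ^ α ≤
      (n:ℝ) ^ (2*γ) * ∑ j, ∏ i ∈ Finset.univ.erase j, lam (l i) ^ (-β) := by
  haveI : NeZero n := ⟨by omega⟩
  obtain ⟨j₀, -, hj₀'⟩ := Finset.exists_max_image (Finset.univ : Finset (Fin n))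
    (fun j => lam (l j)) Finset.univ_nonempty
  have hj₀ : ∀ j, lam (l j) ≤ lam (l j₀) := fun j => hj₀' j (Finset.mem_univ j)
  have hL1 : 1 ≤ lam (l j₀) := one_le_lam _
  have hLpos : 0 < lam (l j₀) := lam_pos _
  have hnR : (0:ℝ) < n := by positivity
  have hn1 : ((n - 1 : ℕ) : ℝ) = (n:ℝ) - 1 := by
    rw [Nat.cast_sub (by omega)]; norm_num
  -- numerator bound
  have hnum : lam k ^ γ ≤ (n:ℝ)^(2*γ) * lam (l j₀) ^ γ := by
    have hb : lam k ≤ (n:ℝ)^2 * lam (l j₀) := lam_sum_le (by omega) k l hl hj₀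
    calc lam k ^ γ ≤ ((n:ℝ)^2 * lam (l j₀)) ^ γ :=
          Real.rpow_le_rpow (lam_pos k).le hb hγ0
    _ = ((n:ℝ)^2) ^ γ * lam (l j₀) ^ γ := Real.mul_rpow (by positivity) hLpos.le
    _ = (n:ℝ)^(2*γ) * lam (l j₀) ^ γ := by
        rw [← Real.rpow_natCast (n:ℝ) 2, ← Real.rpow_mul hnR.le]
        norm_num
  -- product bound
  have hprod : lam (l j₀) ^ γ * ∏ j, lam (l j) ^ (-α) ≤
      ∏ i ∈ Finset.univ.erase j₀, lam (l i) ^ (-β) := by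
    rw [← Finset.mul_prod_erase Finset.univ (fun j => lam (l j) ^ (-α)) (Finset.mem_univ j₀)]
    have hfac : ∏ i ∈ Finset.univ.erase j₀, lam (l i) ^ (-α)
        ≤ (∏ i ∈ Finset.univ.erase j₀, lam (l i) ^ (-β)) *
            lam (l j₀) ^ ((β - α) * ((n - 1 : ℕ):ℝ)) := by
      have step : ∏ i ∈ Finset.univ.erase j₀, lam (l i) ^ (-α)
          ≤ ∏ i ∈ Finset.univ.erase j₀, (lam (l i) ^ (-β) * lam (l j₀) ^ (β - α)) := by
        apply Finset.prod_le_prod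
        · intro i _; exact Real.rpow_nonneg (lam_pos _).le _
        · intro i _
          have hsplit : lam (l i) ^ (-α) = lam (l i) ^ (-β) * lam (l i) ^ (β - α) := by
            rw [← Real.rpow_add (lam_pos _)]; ring_nf
          rw [hsplit]
          exact mul_le_mul_of_nonneg_left
            (Real.rpow_le_rpow (lam_pos _).le (hj₀ i) (by linarith))
            (Real.rpow_nonneg (lam_pos _).le _)
      calc ∏ i ∈ Finset.univ.erase j₀, lam (l i) ^ (-α)
          ≤ ∏ i ∈ Finset.univ.erase j₀, (lam (l i) ^ (-β) * lam (l j₀) ^ (β - α)) := step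
      _ = (∏ i ∈ Finset.univ.erase j₀, lam (l i) ^ (-β)) *
            lam (l j₀) ^ ((β - α) * ((n - 1 : ℕ):ℝ)) := by
          rw [Finset.prod_mul_distrib, Finset.prod_const,
            Finset.card_erase_of_mem (Finset.mem_univ j₀), Finset.card_univ, Fintype.card_fin,
            ← Real.rpow_natCast (lam (l j₀) ^ (β - α)) (n - 1), ← Real.rpow_mul hLpos.le]
    calc lam (l j₀) ^ γ * (lam (l j₀) ^ (-α) * ∏ i ∈ Finset.univ.erase j₀, lam (l i) ^ (-α))
        ≤ lam (l j₀) ^ γ * (lam (l j₀) ^ (-α) *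
            ((∏ i ∈ Finset.univ.erase j₀, lam (l i) ^ (-β)) *
              lam (l j₀) ^ ((β - α) * ((n - 1 : ℕ):ℝ)))) := by
          apply mul_le_mul_of_nonneg_left ?_ (Real.rpow_nonneg hLpos.le _)
          exact mul_le_mul_of_nonneg_left hfac (Real.rpow_nonneg hLpos.le _)
    _ = (lam (l j₀) ^ γ * lam (l j₀) ^ (-α) * lam (l j₀) ^ ((β - α) * ((n - 1 : ℕ):ℝ))) *
          ∏ i ∈ Finset.univ.erase j₀, lam (l i) ^ (-β) := by ring
    _ = lam (l j₀) ^ (γ + (-α) + (β - α) * ((n - 1 : ℕ):ℝ)) *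
          ∏ i ∈ Finset.univ.erase j₀, lam (l i) ^ (-β) := by
        rw [← Real.rpow_add hLpos, ← Real.rpow_add hLpos]
    _ ≤ 1 * ∏ i ∈ Finset.univ.erase j₀, lam (l i) ^ (-β) := by
        apply mul_le_mul_of_nonneg_right
        · apply Real.rpow_le_one_of_one_le_of_nonpos hL1
          rw [hn1]; linarith
        · exact Finset.prod_nonneg fun i _ => Real.rpow_nonneg (lam_pos _).le _
    _ = ∏ i ∈ Finset.univ.erase j₀, lam (l i) ^ (-β) := one_mul _
  have hdiv : lam k ^ γ / ∏ j, lam (l j) ^ α = lam k ^ γ * ∏ j, lam (l j) ^ (-α) := by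
    rw [div_eq_mul_inv, ← Finset.prod_inv_distrib]
    congr 1
    apply Finset.prod_congr rfl
    intro i _
    exact (Real.rpow_neg (lam_pos _).le α).symm
  rw [hdiv]
  calc lam k ^ γ * ∏ j, lam (l j) ^ (-α)
      ≤ ((n:ℝ)^(2*γ) * lam (l j₀) ^ γ) * ∏ j, lam (l j) ^ (-α) :=
        mul_le_mul_of_nonneg_right hnum
          (Finset.prod_nonneg fun i _ => Real.rpow_nonneg (lam_pos _).le _)
  _ = (n:ℝ)^(2*γ) * (lam (l j₀) ^ γ * ∏ j, lam (l j) ^ (-α)) := by ring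
  _ ≤ (n:ℝ)^(2*γ) * ∏ i ∈ Finset.univ.erase j₀, lam (l i) ^ (-β) :=
        mul_le_mul_of_nonneg_left hprod (Real.rpow_nonneg hnR.le _)
  _ ≤ (n:ℝ)^(2*γ) * ∑ j, ∏ i ∈ Finset.univ.erase j, lam (l i) ^ (-β) := by
        apply mul_le_mul_of_nonneg_left ?_ (Real.rpow_nonneg hnR.le _)
        exact Finset.single_le_sum
          (f := fun j => ∏ i ∈ Finset.univ.erase j, lam (l i) ^ (-β))
          (fun j _ => Finset.prod_nonneg fun i _ => Real.rpow_nonneg (lam_pos _).le _)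
          (Finset.mem_univ j₀)

/-- Summability for convolutional Wick powers: if `n, d ≥ 2` and `(n+1)/(n−1) > d/2`,
then for every `γ < d/2 + min(d−2, 1) + n(1 − d/2)` one has
`sup_{k ∈ ℤ^d} Σ_{l₁+⋯+l_n = k} (λ_k)^γ /
    ((λ_{l₁})^{1+min(d−2,1)/n}⋯(λ_{l_n})^{1+min(d−2,1)/n}) < ∞`. -/
theorem convolutional_wick_power_summability (n d : ℕ) (hn : 2 ≤ n) (hd : 2 ≤ d)
    (h : ((n : ℝ) + 1) / ((n : ℝ) - 1) > (d : ℝ) / 2) (γ : ℝ)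
    (hγ : γ < (d : ℝ) / 2 + min ((d : ℝ) - 2) 1 + (n : ℝ) * (1 - (d : ℝ) / 2)) :
    (⨆ k : Fin d → ℤ,
        ∑' l : {l : Fin n → (Fin d → ℤ) // ∑ j, l j = k},
          ENNReal.ofReal ((lam k) ^ γ /
            ∏ j, (lam (l.1 j)) ^ (1 + min ((d : ℝ) - 2) 1 / (n : ℝ)))) < ⊤ := by
  classical
  have hnR : (1:ℝ) < (n:ℝ) := by
    have : (2:ℝ) ≤ (n:ℝ) := by exact_mod_cast hn
    linarith
  have hn2R : (2:ℝ) ≤ (n:ℝ) := by exact_mod_cast hn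
  have hdR : (2:ℝ) ≤ (d:ℝ) := by exact_mod_cast hd
  set m : ℝ := min ((d:ℝ) - 2) 1 with hm
  set α : ℝ := 1 + m / (n:ℝ) with hα
  set γmax : ℝ := (d:ℝ)/2 + m + (n:ℝ) * (1 - (d:ℝ)/2) with hγmax
  have hγ' : γ < γmax := hγ
  -- α ≤ d/2
  have hαd : α ≤ (d:ℝ)/2 := by
    rcases Nat.lt_or_ge d 3 with h3 | h3
    · have hd2 : d = 2 := by omega
      subst hd2
      have hm0 : m = 0 := by rw [hm]; norm_num
      rw [hα, hm0]
      norm_num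
    · have h3R : (3:ℝ) ≤ (d:ℝ) := by exact_mod_cast h3
      have hm1 : m = 1 := min_eq_right (by linarith)
      have : m / (n:ℝ) ≤ 1/2 := by
        rw [hm1]
        rw [div_le_div_iff₀ (by linarith) (by norm_num)]
        linarith
      rw [hα]; linarith
  -- γmax > 0
  have hγmaxpos : 0 < γmax := by
    rcases Nat.lt_or_ge d 3 with h3 | h3
    · have hd2 : d = 2 := by omega
      subst hd2
      have hm0 : m = 0 := by rw [hm]; norm_num
      rw [hγmax, hm0]
      norm_num
    · have h3R : (3:ℝ) ≤ (d:ℝ) := by exact_mod_cast h3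
      have hm1 : m = 1 := min_eq_right (by linarith)
      have h' : (d:ℝ)/2 * ((n:ℝ) - 1) < (n:ℝ) + 1 := by
        rw [← lt_div_iff₀ (by linarith : (0:ℝ) < (n:ℝ) - 1)]
        exact h
      rw [hγmax, hm1]; nlinarith
  set γ₀ : ℝ := max γ 0 with hγ₀def
  have hγ₀0 : 0 ≤ γ₀ := le_max_right _ _
  have hγ₀lt : γ₀ < γmax := max_lt hγ' hγmaxpos
  set β : ℝ := (d:ℝ)/2 + (γmax - γ₀)/((n:ℝ) - 1) with hβ
  have hβd : (d:ℝ)/2 < β := by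
    rw [hβ]
    have : 0 < (γmax - γ₀)/((n:ℝ) - 1) := div_pos (by linarith) (by linarith)
    linarith
  have hαβ : α ≤ β := le_trans hαd hβd.le
  have hexp : γ₀ + ((n:ℝ) - 1) * (β - α) ≤ α := by
    apply le_of_eq
    have hne : (n:ℝ) - 1 ≠ 0 := by intro hc; nlinarith
    have hnn : (n:ℝ) ≠ 0 := by positivity
    rw [hβ, hγmax, hα]
    field_simp
    ring
  -- the uniform bound
  set F : (Fin d → ℤ) → ℝ≥0∞ := fun v => ENNReal.ofReal (lam v ^ (-β)) with hF
  have hZ : ∑' x : Fin d → ℤ, F x < ⊤ := Z_lt_top (by omega) hβd (fun t ht => Z1_lt_top ht) (fun f m' => tsum_pi_prod f m') (fun s' f hf => ofReal_prod' s' f hf)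
  set Z : ℝ≥0∞ := ∑' x : Fin d → ℤ, F x with hZdef
  set C : ℝ≥0∞ := ENNReal.ofReal ((n:ℝ) ^ (2*γ₀)) *
    ∑ j : Fin n, Z ^ (Fintype.card {i : Fin n // i ≠ j}) with hC
  have hCtop : C < ⊤ := by
    rw [hC]
    apply ENNReal.mul_lt_top ENNReal.ofReal_lt_top
    rw [ENNReal.sum_lt_top]
    intro j _
    exact ENNReal.pow_lt_top hZ
  refine lt_of_le_of_lt (iSup_le fun k => ?_) hCtop
  calc ∑' l : {l : Fin n → (Fin d → ℤ) // ∑ j, l j = k},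
        ENNReal.ofReal ((lam k) ^ γ / ∏ j, (lam (l.1 j)) ^ α)
      ≤ ∑' l : {l : Fin n → (Fin d → ℤ) // ∑ j, l j = k},
          ENNReal.ofReal ((n:ℝ)^(2*γ₀) *
            ∑ j, ∏ i ∈ Finset.univ.erase j, lam (l.1 i) ^ (-β)) := by
        apply ENNReal.tsum_le_tsum
        intro l
        apply ENNReal.ofReal_le_ofReal
        have hD : 0 < ∏ j, lam (l.1 j) ^ α :=
          Finset.prod_pos fun i _ => Real.rpow_pos_of_pos (lam_pos _) _
        calc lam k ^ γ / ∏ j, lam (l.1 j) ^ α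
            ≤ lam k ^ γ₀ / ∏ j, lam (l.1 j) ^ α := by
              apply (div_le_div_iff_of_pos_right hD).mpr
              exact Real.rpow_le_rpow_of_exponent_le (one_le_lam k) (le_max_left γ 0)
        _ ≤ (n:ℝ)^(2*γ₀) * ∑ j, ∏ i ∈ Finset.univ.erase j, lam (l.1 i) ^ (-β) :=
              key_pointwise hn l.1 l.2 hγ₀0 hαβ hexp
  _ = ENNReal.ofReal ((n:ℝ)^(2*γ₀)) *
        ∑' l : {l : Fin n → (Fin d → ℤ) // ∑ j, l j = k},
          ∑ j, ∏ i ∈ Finset.univ.erase j, F (l.1 i) := by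
        rw [← ENNReal.tsum_mul_left]
        apply tsum_congr
        intro l
        rw [ENNReal.ofReal_mul (by positivity), ENNReal.ofReal_sum_of_nonneg
          (fun j _ => Finset.prod_nonneg fun i _ => Real.rpow_nonneg (lam_pos _).le _)]
        congr 1
        apply Finset.sum_congr rfl
        intro j _
        exact ofReal_prod' _ _ (fun i _ => Real.rpow_nonneg (lam_pos _).le _)
  _ ≤ C := by
        rw [hC]
        apply mul_le_mul_right
        rw [Summable.tsum_finsetSum (fun j _ => ENNReal.summable)]
        apply Finset.sum_le_sum
        intro j _
        have hinj : Function.Injective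
            (fun (l : {l : Fin n → (Fin d → ℤ) // ∑ j, l j = k})
              (i : {i : Fin n // i ≠ j}) => l.1 i.1) := by
          intro l l' hll
          apply Subtype.ext
          funext i
          by_cases hi : i = j
          · subst hi
            have hsum : ∀ (w : {l : Fin n → (Fin d → ℤ) // ∑ j, l j = k}),
                w.1 i = k - ∑ i' ∈ Finset.univ.erase i, w.1 i' := by
              intro w
              have h2 := w.2
              rw [← Finset.add_sum_erase Finset.univ w.1 (Finset.mem_univ i)] at h2
              exact eq_sub_of_add_eq h2
            rw [hsum l, hsum l']
            congr 1
            apply Finset.sum_congr rfl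
            intro i' hi'
            exact congrFun hll ⟨i', (Finset.mem_erase.mp hi').1⟩
          · exact congrFun hll ⟨i, hi⟩
        calc ∑' l : {l : Fin n → (Fin d → ℤ) // ∑ j, l j = k},
              ∏ i ∈ Finset.univ.erase j, F (l.1 i)
            = ∑' l : {l : Fin n → (Fin d → ℤ) // ∑ j, l j = k},
              ∏ i : {i : Fin n // i ≠ j}, F (l.1 i.1) := by
              apply tsum_congr
              intro l
              exact Finset.prod_subtype _ (fun i => by simp) (fun i => F (l.1 i))
        _ ≤ ∑' g : {i : Fin n // i ≠ j} → (Fin d → ℤ), ∏ i, F (g i) :=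
              ENNReal.tsum_comp_le_tsum_of_injective hinj _
        _ = Z ^ (Fintype.card {i : Fin n // i ≠ j}) := tsum_pi_prod' F
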